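/- Let Ω be a bounded open subset of ℝ^N (N ≥ 3) and let p₁, p₂, q : closure(Ω) → ℝ be continuous functions satisfying 1 < p₂(x) < q⁻ ≤ q⁺ < p₁(x) < N for all x ∈ closure(Ω), where q⁻ = min_{closure(Ω)} q and q⁺ = max_{closure(Ω)} q. Then there exists a constant λ₁ > 0 such that for every function u : ℝ^N → ℝ of class C¹ with compact support contained in Ω, ∫_Ω (1/p₁(x))|Du(x)|^{p₁(x)} dx + ∫_Ω (1/p₂(x))|Du(x)|^{p₂(x)} dx ≥ λ₁ ∫_Ω (1/q(x))|u(x)|^{q(x)} dx. -/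

import Mathlib

open MeasureTheory ENNReal
open NNReal Set


private lemma rpow_le_add_rpow {t a b c : ℝ} (ht : 0 ≤ t) (hb : 0 < b) (hbc : b ≤ c)
    (hca : c ≤ a) : t ^ c ≤ t ^ a + t ^ b := by
  rcases le_or_gt t 1 with h1 | h1
  · rcases eq_or_lt_of_le ht with h0 | h0
    · rw [← h0, Real.zero_rpow (by linarith : c ≠ 0), Real.zero_rpow (by linarith : a ≠ 0),
        Real.zero_rpow (by linarith : b ≠ 0)]
      norm_num
    · have h2 := Real.rpow_le_rpow_of_exponent_ge h0 h1 hbc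
      have h3 := Real.rpow_nonneg ht a
      linarith
  · have h2 := Real.rpow_le_rpow_of_exponent_le h1.le hca
    have h3 := Real.rpow_nonneg ht b
    linarith

private lemma ptwise_I {t qx qm qp : ℝ} (ht : 0 ≤ t) (hqm : 0 < qm) (h1 : qm ≤ qx)
    (h2 : qx ≤ qp) : 1 / qx * t ^ qx ≤ 1 / qm * (t ^ qm + t ^ qp) := by
  have h3 : t ^ qx ≤ t ^ qp + t ^ qm := rpow_le_add_rpow ht hqm h1 h2
  have h4 : 1 / qx ≤ 1 / qm := one_div_le_one_div_of_le hqm h1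
  have h5 : (0:ℝ) < qx := lt_of_lt_of_le hqm h1
  have h6 : 0 ≤ t ^ qx := Real.rpow_nonneg ht _
  have h7 : (0:ℝ) < 1 / qx := by positivity
  calc 1 / qx * t ^ qx ≤ 1 / qm * t ^ qx := mul_le_mul_of_nonneg_right h4 h6
    _ ≤ 1 / qm * (t ^ qm + t ^ qp) := by
        have := Real.rpow_nonneg ht qm
        have := Real.rpow_nonneg ht qp
        exact mul_le_mul_of_nonneg_left (by linarith) (by positivity)

private lemma ptwise_J {t pa pb a b n : ℝ} (ht : 0 ≤ t) (hpb : 0 < pb) (hpbb : pb ≤ b)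
    (hba : b ≤ a) (hapa : a ≤ pa) (hpan : pa ≤ n) (hpbn : pb ≤ n) :
    1 / (2 * n) * (t ^ a + t ^ b) ≤ 1 / pa * t ^ pa + 1 / pb * t ^ pb := by
  have hn : 0 < n := lt_of_lt_of_le hpb hpbn
  rcases le_or_gt t 1 with h1 | h1
  · have h2 : t ^ a ≤ t ^ b := by
      rcases eq_or_lt_of_le ht with h0 | h0
      · rw [← h0, Real.zero_rpow (by linarith : a ≠ 0), Real.zero_rpow (by linarith : b ≠ 0)]
      · exact Real.rpow_le_rpow_of_exponent_ge h0 h1 hba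
    have h3 : t ^ b ≤ t ^ pb := by
      rcases eq_or_lt_of_le ht with h0 | h0
      · rw [← h0, Real.zero_rpow (by linarith : b ≠ 0), Real.zero_rpow (by linarith : pb ≠ 0)]
      · exact Real.rpow_le_rpow_of_exponent_ge h0 h1 hpbb
    have h4 : 1 / n ≤ 1 / pb := one_div_le_one_div_of_le hpb hpbn
    have h5 : 0 ≤ t ^ pb := Real.rpow_nonneg ht _
    have hpa : 0 < pa := by linarith
    have h6 : 0 ≤ 1 / pa * t ^ pa := mul_nonneg (one_div_nonneg.mpr hpa.le) (Real.rpow_nonneg ht _)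
    have hb0 : 0 ≤ t ^ b := Real.rpow_nonneg ht _
    have e : 1 / (2 * n) * (2 * t ^ b) = 1 / n * t ^ b := by field_simp
    have h7 : 1 / (2 * n) * (t ^ a + t ^ b) ≤ 1 / n * t ^ b := by
      rw [← e]
      exact mul_le_mul_of_nonneg_left (by linarith) (by positivity)
    have h8 : 1 / n * t ^ b ≤ 1 / pb * t ^ pb :=
      le_trans (mul_le_mul_of_nonneg_right h4 hb0) (mul_le_mul_of_nonneg_left h3 (one_div_nonneg.mpr (by linarith)))
    linarith
  · have hpa : 0 < pa := by linarith
    have h2 : t ^ b ≤ t ^ a := Real.rpow_le_rpow_of_exponent_le h1.le hba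
    have h3 : t ^ a ≤ t ^ pa := Real.rpow_le_rpow_of_exponent_le h1.le hapa
    have h4 : 1 / n ≤ 1 / pa := one_div_le_one_div_of_le hpa hpan
    have h5 : 0 ≤ t ^ pa := Real.rpow_nonneg ht _
    have h6 : 0 ≤ 1 / pb * t ^ pb := mul_nonneg (one_div_nonneg.mpr hpb.le) (Real.rpow_nonneg ht _)
    have ha0 : 0 ≤ t ^ a := Real.rpow_nonneg ht _
    have e : 1 / (2 * n) * (2 * t ^ a) = 1 / n * t ^ a := by field_simp
    have h7 : 1 / (2 * n) * (t ^ a + t ^ b) ≤ 1 / n * t ^ a := by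
      rw [← e]
      exact mul_le_mul_of_nonneg_left (by linarith) (by positivity)
    have h8 : 1 / n * t ^ a ≤ 1 / pa * t ^ pa :=
      le_trans (mul_le_mul_of_nonneg_right h4 ha0) (mul_le_mul_of_nonneg_left h3 (one_div_nonneg.mpr (by linarith)))
    linarith



private lemma poincare {N : ℕ} {Ω : Set (EuclideanSpace ℝ (Fin N))}
    (hΩb : Bornology.IsBounded Ω) {u : EuclideanSpace ℝ (Fin N) → ℝ}
    (hu : ContDiff ℝ 1 u) (hsupp : tsupport u ⊆ Ω) {r : ℝ≥0}
    (hr1 : 1 ≤ r) (hrN : (r : ℝ) < N) :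
    (∫⁻ x, (‖u x‖₊ : ℝ≥0∞) ^ (r : ℝ)) ≤
      ((eLpNormLESNormFDerivOfLeConst ℝ volume Ω r r : ℝ≥0∞) ^ (r : ℝ)) *
        ∫⁻ x, (‖fderiv ℝ u x‖₊ : ℝ≥0∞) ^ (r : ℝ) := by
  have hr0 : r ≠ 0 := by
    intro h; rw [h] at hr1; exact absurd hr1 (by norm_num)
  have hrR : (0:ℝ) < (r : ℝ) := by exact_mod_cast (lt_of_lt_of_le zero_lt_one hr1)
  have h2p : r < Module.finrank ℝ (EuclideanSpace ℝ (Fin N)) := by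
    rw [finrank_euclideanSpace_fin]
    exact_mod_cast hrN
  have hpq : (r : ℝ)⁻¹ - (Module.finrank ℝ (EuclideanSpace ℝ (Fin N)) : ℝ)⁻¹ ≤ ((r : ℝ≥0) : ℝ)⁻¹ :=
    sub_le_self _ (by positivity)
  have h := eLpNorm_le_eLpNorm_fderiv_of_le (μ := volume) hu
    ((subset_tsupport u).trans hsupp) hr1 h2p hpq hΩb
  rw [eLpNorm_nnreal_eq_lintegral hr0, eLpNorm_nnreal_eq_lintegral hr0] at h
  set X := ∫⁻ x, (‖u x‖₊ : ℝ≥0∞) ^ (r : ℝ) with hX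
  set Y := ∫⁻ x, (‖fderiv ℝ u x‖₊ : ℝ≥0∞) ^ (r : ℝ) with hY
  set C := (eLpNormLESNormFDerivOfLeConst ℝ volume Ω r r : ℝ≥0∞) with hC
  calc X = (X ^ (1 / (r:ℝ))) ^ (r:ℝ) := by
        rw [← ENNReal.rpow_mul, one_div, inv_mul_cancel₀ hrR.ne', ENNReal.rpow_one]
    _ ≤ (C * Y ^ (1 / (r:ℝ))) ^ (r:ℝ) := ENNReal.rpow_le_rpow h hrR.le
    _ = C ^ (r:ℝ) * Y := by
        rw [ENNReal.mul_rpow_of_nonneg _ _ hrR.le, ← ENNReal.rpow_mul, one_div,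
          inv_mul_cancel₀ hrR.ne', ENNReal.rpow_one]



/-- `J(u) = ∫_Ω (1/p₁(x))|Du|^{p₁(x)} dx + ∫_Ω (1/p₂(x))|Du|^{p₂(x)} dx`. -/
noncomputable def Jfun (N : ℕ) (Ω : Set (EuclideanSpace ℝ (Fin N)))
    (p₁ p₂ : EuclideanSpace ℝ (Fin N) → ℝ) (u : EuclideanSpace ℝ (Fin N) → ℝ) : ℝ≥0∞ :=
  (∫⁻ x in Ω, ENNReal.ofReal ((1 / p₁ x) * ‖fderiv ℝ u x‖ ^ p₁ x)) +
    ∫⁻ x in Ω, ENNReal.ofReal ((1 / p₂ x) * ‖fderiv ℝ u x‖ ^ p₂ x)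

/-- `I(u) = ∫_Ω (1/q(x))|u|^{q(x)} dx`. -/
noncomputable def Ifun (N : ℕ) (Ω : Set (EuclideanSpace ℝ (Fin N)))
    (q : EuclideanSpace ℝ (Fin N) → ℝ) (u : EuclideanSpace ℝ (Fin N) → ℝ) : ℝ≥0∞ :=
  ∫⁻ x in Ω, ENNReal.ofReal ((1 / q x) * |u x| ^ q x)

/-- If `Ω ⊆ ℝ^N` (`N ≥ 3`) is bounded open and `p₁, p₂, q` are continuous on
    `closure Ω` with `1 < p₂(x) < q⁻ ≤ q⁺ < p₁(x) < N`, then there is `λ₁ > 0` such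
    that `J(u) ≥ λ₁ I(u)` for every `C¹` function `u` with compact support in `Ω`. -/
theorem stmt7 (N : ℕ) (hN : 3 ≤ N) (Ω : Set (EuclideanSpace ℝ (Fin N)))
    (hΩo : IsOpen Ω) (hΩb : Bornology.IsBounded Ω)
    (p₁ p₂ q : EuclideanSpace ℝ (Fin N) → ℝ)
    (hp₁ : ContinuousOn p₁ (closure Ω)) (hp₂ : ContinuousOn p₂ (closure Ω))
    (hq : ContinuousOn q (closure Ω))
    (qm qp : ℝ) (hqm : IsLeast (q '' closure Ω) qm)
    (hqp : IsGreatest (q '' closure Ω) qp)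
    (hcond : ∀ x ∈ closure Ω, 1 < p₂ x ∧ p₂ x < qm ∧ qp < p₁ x ∧ p₁ x < N) :
    ∃ l : ℝ, 0 < l ∧ ∀ u : EuclideanSpace ℝ (Fin N) → ℝ,
      ContDiff ℝ 1 u → HasCompactSupport u → tsupport u ⊆ Ω →
      ENNReal.ofReal l * Ifun N Ω q u ≤ Jfun N Ω p₁ p₂ u := by
  classical
  have hK : IsCompact (closure Ω) := hΩb.isCompact_closure
  obtain ⟨x₀, hx₀K, hx₀⟩ := hqm.1
  have hKne : (closure Ω).Nonempty := ⟨x₀, hx₀K⟩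
  obtain ⟨xa, hxaK, hmina⟩ := hK.exists_isMinOn hKne hp₁
  obtain ⟨xb, hxbK, hmaxb⟩ := hK.exists_isMaxOn hKne hp₂
  set a := p₁ xa with ha_def
  set b := p₂ xb with hb_def
  have hb1 : 1 < b := (hcond xb hxbK).1
  have hbqm : b < qm := (hcond xb hxbK).2.1
  have hqpa : qp < a := (hcond xa hxaK).2.2.1
  have haN : a < N := (hcond xa hxaK).2.2.2
  have hqmqp : qm ≤ qp := by
    have h := hqp.2 ⟨x₀, hx₀K, rfl⟩
    rw [hx₀] at h; exact h
  have hqm1 : 1 < qm := hb1.trans hbqm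
  have hN3 : (3:ℝ) ≤ (N:ℝ) := by exact_mod_cast hN
  have hNpos : (0:ℝ) < N := by linarith
  -- NNReal exponents
  set r₁ : ℝ≥0 := qm.toNNReal with hr₁def
  set r₂ : ℝ≥0 := qp.toNNReal with hr₂def
  have hr₁ : (r₁ : ℝ) = qm := Real.coe_toNNReal _ (by linarith)
  have hr₂ : (r₂ : ℝ) = qp := Real.coe_toNNReal _ (by linarith)
  set C₁ : ℝ≥0 := eLpNormLESNormFDerivOfLeConst ℝ (volume) Ω r₁ r₁ with hC₁def
  set C₂ : ℝ≥0 := eLpNormLESNormFDerivOfLeConst ℝ (volume) Ω r₂ r₂ with hC₂def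
  set Kc : ℝ≥0∞ := ENNReal.ofReal (1/qm) * ((C₁ : ℝ≥0∞) ^ qm + (C₂ : ℝ≥0∞) ^ qp) *
      ENNReal.ofReal (2*(N:ℝ)) + 1 with hKcdef
  have hKc_ne_top : Kc ≠ ⊤ := by
    rw [hKcdef]
    refine ENNReal.add_ne_top.2 ⟨?_, ENNReal.one_ne_top⟩
    refine ENNReal.mul_ne_top (ENNReal.mul_ne_top ENNReal.ofReal_ne_top ?_) ENNReal.ofReal_ne_top
    exact ENNReal.add_ne_top.2
      ⟨ENNReal.rpow_ne_top_of_nonneg (by linarith) ENNReal.coe_ne_top,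
       ENNReal.rpow_ne_top_of_nonneg (by linarith) ENNReal.coe_ne_top⟩
  have hKc0 : Kc ≠ 0 := by
    rw [hKcdef]
    exact ne_of_gt (lt_of_lt_of_le zero_lt_one le_add_self)
  refine ⟨(Kc.toReal)⁻¹, inv_pos.2 (ENNReal.toReal_pos hKc0 hKc_ne_top), ?_⟩
  intro u hu hcs hsupp
  have hgc : Continuous fun x => ‖fderiv ℝ u x‖ := (hu.continuous_fderiv one_ne_zero).norm
  set A := ∫⁻ x in Ω, ENNReal.ofReal (‖fderiv ℝ u x‖ ^ a) with hA
  set B := ∫⁻ x in Ω, ENNReal.ofReal (‖fderiv ℝ u x‖ ^ b) with hB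
  set X1 := ∫⁻ x in Ω, ENNReal.ofReal (|u x| ^ qm) with hX1
  set X2 := ∫⁻ x in Ω, ENNReal.ofReal (|u x| ^ qp) with hX2
  have hmeasg : ∀ s : ℝ, 0 < s →
      Measurable fun x => ENNReal.ofReal (‖fderiv ℝ u x‖ ^ s) := fun s hs =>
    (ENNReal.continuous_ofReal.comp (hgc.rpow_const fun x => Or.inr hs.le)).measurable
  have hmeasu : ∀ s : ℝ, 0 < s → Measurable fun x => ENNReal.ofReal (|u x| ^ s) := fun s hs =>
    (ENNReal.continuous_ofReal.comp (hu.continuous.abs.rpow_const fun x => Or.inr hs.le)).measurable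
  -- Step 1 : I(u) ≤ (1/qm) (X1 + X2)
  have step1 : Ifun N Ω q u ≤ ENNReal.ofReal (1/qm) * (X1 + X2) := by
    have hmono : Ifun N Ω q u ≤
        ∫⁻ x in Ω, ENNReal.ofReal ((1/qm) * (|u x| ^ qm + |u x| ^ qp)) := by
      simp only [Ifun]
      refine lintegral_mono_ae ?_
      filter_upwards [ae_restrict_mem hΩo.measurableSet] with x hx
      apply ENNReal.ofReal_le_ofReal
      have hxK := subset_closure hx
      exact ptwise_I (abs_nonneg _) (by linarith) (hqm.2 ⟨x, hxK, rfl⟩) (hqp.2 ⟨x, hxK, rfl⟩)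
    refine hmono.trans (le_of_eq ?_)
    have heq : ∀ x : EuclideanSpace ℝ (Fin N),
        ENNReal.ofReal ((1/qm) * (|u x| ^ qm + |u x| ^ qp)) =
        ENNReal.ofReal (1/qm) * (ENNReal.ofReal (|u x| ^ qm) + ENNReal.ofReal (|u x| ^ qp)) := by
      intro x
      rw [ENNReal.ofReal_mul (le_of_lt (one_div_pos.2 (by linarith))),
        ENNReal.ofReal_add (Real.rpow_nonneg (abs_nonneg _) _)
          (Real.rpow_nonneg (abs_nonneg _) _)]
    simp_rw [heq]
    rw [lintegral_const_mul' _ _ ENNReal.ofReal_ne_top,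
      lintegral_add_left (hmeasu qm (by linarith)) _]
  -- Sobolev/Poincaré step
  have sob : ∀ r : ℝ≥0, 1 < (r:ℝ) → (r:ℝ) < N → b ≤ (r:ℝ) → (r:ℝ) ≤ a →
      (∫⁻ x in Ω, ENNReal.ofReal (|u x| ^ (r:ℝ))) ≤
        ((eLpNormLESNormFDerivOfLeConst ℝ (volume) Ω r r : ℝ≥0∞) ^ (r:ℝ)) * (A + B) := by
    intro r hr1 hrN hbr hra
    have hrpos : (0:ℝ) < (r:ℝ) := lt_trans zero_lt_one hr1
    have e1 : ∀ x : EuclideanSpace ℝ (Fin N),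
        ENNReal.ofReal (|u x| ^ (r:ℝ)) = (‖u x‖₊ : ℝ≥0∞) ^ (r:ℝ) := fun x => by
      rw [← Real.norm_eq_abs, ← enorm_eq_nnnorm, ← ofReal_norm,
        ← ENNReal.ofReal_rpow_of_nonneg (norm_nonneg _) hrpos.le]
    have e2 : ∀ x : EuclideanSpace ℝ (Fin N),
        ENNReal.ofReal (‖fderiv ℝ u x‖ ^ (r:ℝ)) = (‖fderiv ℝ u x‖₊ : ℝ≥0∞) ^ (r:ℝ) := fun x => by
      rw [← enorm_eq_nnnorm, ← ofReal_norm,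
        ← ENNReal.ofReal_rpow_of_nonneg (norm_nonneg _) hrpos.le]
    have hglob : (∫⁻ x, ENNReal.ofReal (‖fderiv ℝ u x‖ ^ (r:ℝ))) =
        ∫⁻ x in Ω, ENNReal.ofReal (‖fderiv ℝ u x‖ ^ (r:ℝ)) := by
      rw [← lintegral_indicator hΩo.measurableSet]
      refine lintegral_congr fun x => ?_
      by_cases hx : x ∈ Ω
      · rw [Set.indicator_of_mem hx]
      · rw [Set.indicator_of_notMem hx]
        have hx' : x ∉ Function.support (fderiv ℝ u) := fun hmem =>
          hx (hsupp ((support_fderiv_subset ℝ) hmem))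
        have hf0 : fderiv ℝ u x = 0 := Function.notMem_support.1 hx'
        rw [hf0]
        simp [Real.zero_rpow hrpos.ne']
    have hpt : ∀ x : EuclideanSpace ℝ (Fin N),
        ENNReal.ofReal (‖fderiv ℝ u x‖ ^ (r:ℝ)) ≤
          ENNReal.ofReal (‖fderiv ℝ u x‖ ^ a) + ENNReal.ofReal (‖fderiv ℝ u x‖ ^ b) := by
      intro x
      rw [← ENNReal.ofReal_add (Real.rpow_nonneg (norm_nonneg _) _)
        (Real.rpow_nonneg (norm_nonneg _) _)]
      exact ENNReal.ofReal_le_ofReal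
        (rpow_le_add_rpow (norm_nonneg _) (by linarith) hbr hra)
    calc (∫⁻ x in Ω, ENNReal.ofReal (|u x| ^ (r:ℝ)))
        ≤ ∫⁻ x, ENNReal.ofReal (|u x| ^ (r:ℝ)) := setLIntegral_le_lintegral _ _
      _ = ∫⁻ x, (‖u x‖₊ : ℝ≥0∞) ^ (r:ℝ) := by simp_rw [e1]
      _ ≤ ((eLpNormLESNormFDerivOfLeConst ℝ (volume) Ω r r : ℝ≥0∞) ^ (r:ℝ)) *
            ∫⁻ x, (‖fderiv ℝ u x‖₊ : ℝ≥0∞) ^ (r:ℝ) :=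
          poincare hΩb hu hsupp (by exact_mod_cast hr1.le) hrN
      _ = ((eLpNormLESNormFDerivOfLeConst ℝ (volume) Ω r r : ℝ≥0∞) ^ (r:ℝ)) *
            ∫⁻ x, ENNReal.ofReal (‖fderiv ℝ u x‖ ^ (r:ℝ)) := by simp_rw [e2]
      _ = ((eLpNormLESNormFDerivOfLeConst ℝ (volume) Ω r r : ℝ≥0∞) ^ (r:ℝ)) *
            ∫⁻ x in Ω, ENNReal.ofReal (‖fderiv ℝ u x‖ ^ (r:ℝ)) := by rw [hglob]
      _ ≤ ((eLpNormLESNormFDerivOfLeConst ℝ (volume) Ω r r : ℝ≥0∞) ^ (r:ℝ)) * (A + B) := by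
          refine mul_le_mul_right ?_ _
          calc (∫⁻ x in Ω, ENNReal.ofReal (‖fderiv ℝ u x‖ ^ (r:ℝ)))
              ≤ ∫⁻ x in Ω, (ENNReal.ofReal (‖fderiv ℝ u x‖ ^ a) +
                  ENNReal.ofReal (‖fderiv ℝ u x‖ ^ b)) := lintegral_mono fun x => hpt x
            _ = A + B := lintegral_add_left (hmeasg a (by linarith)) _
  -- combine the two Sobolev estimates
  have hXAB : X1 + X2 ≤ ((C₁ : ℝ≥0∞) ^ qm + (C₂ : ℝ≥0∞) ^ qp) * (A + B) := by
    have s1 := sob r₁ (by rw [hr₁]; exact hqm1) (by rw [hr₁]; linarith)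
      (by rw [hr₁]; linarith) (by rw [hr₁]; linarith)
    have s2 := sob r₂ (by rw [hr₂]; linarith) (by rw [hr₂]; linarith)
      (by rw [hr₂]; linarith) (by rw [hr₂]; linarith)
    rw [hr₁] at s1
    rw [hr₂] at s2
    calc X1 + X2 ≤ (C₁ : ℝ≥0∞) ^ qm * (A + B) + (C₂ : ℝ≥0∞) ^ qp * (A + B) :=
          add_le_add s1 s2
      _ = ((C₁ : ℝ≥0∞) ^ qm + (C₂ : ℝ≥0∞) ^ qp) * (A + B) := (add_mul _ _ _).symm
  -- Step 4 : (1/(2N)) (A + B) ≤ J(u)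
  have step4 : ENNReal.ofReal (1/(2*(N:ℝ))) * (A + B) ≤ Jfun N Ω p₁ p₂ u := by
    have h1meas : AEMeasurable (fun x => ENNReal.ofReal ((1/p₁ x) * ‖fderiv ℝ u x‖ ^ p₁ x))
        (volume.restrict Ω) := by
      have hp₁' : ContinuousOn p₁ Ω := hp₁.mono subset_closure
      have hpos : ∀ x ∈ Ω, p₁ x ≠ 0 := fun x hx => by
        have := (hcond x (subset_closure hx)).2.2.1
        intro h; rw [h] at this; linarith
      have hc : ContinuousOn (fun x => (1/p₁ x) * ‖fderiv ℝ u x‖ ^ p₁ x) Ω :=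
        (continuousOn_const.div hp₁' hpos).mul
          (hgc.continuousOn.rpow hp₁' fun x hx => Or.inr (by
            have := (hcond x (subset_closure hx)).2.2.1; linarith))
      exact (ENNReal.continuous_ofReal.comp_continuousOn hc).aemeasurable hΩo.measurableSet
    have hpt : ∀ x ∈ Ω,
        ENNReal.ofReal ((1/(2*(N:ℝ))) * (‖fderiv ℝ u x‖ ^ a + ‖fderiv ℝ u x‖ ^ b)) ≤
          ENNReal.ofReal ((1/p₁ x) * ‖fderiv ℝ u x‖ ^ p₁ x) +
            ENNReal.ofReal ((1/p₂ x) * ‖fderiv ℝ u x‖ ^ p₂ x) := by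
      intro x hx
      obtain ⟨h1, h2, h3, h4⟩ := hcond x (subset_closure hx)
      rw [← ENNReal.ofReal_add
        (mul_nonneg (one_div_nonneg.2 (by linarith)) (Real.rpow_nonneg (norm_nonneg _) _))
        (mul_nonneg (one_div_nonneg.2 (by linarith)) (Real.rpow_nonneg (norm_nonneg _) _))]
      refine ENNReal.ofReal_le_ofReal ?_
      exact ptwise_J (norm_nonneg _) (by linarith)
        (isMaxOn_iff.1 hmaxb x (subset_closure hx)) (by linarith)
        (isMinOn_iff.1 hmina x (subset_closure hx)) h4.le (by linarith)
    have hleft : ENNReal.ofReal (1/(2*(N:ℝ))) * (A + B) =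
        ∫⁻ x in Ω, ENNReal.ofReal ((1/(2*(N:ℝ))) * (‖fderiv ℝ u x‖ ^ a + ‖fderiv ℝ u x‖ ^ b)) := by
      have heq : ∀ x : EuclideanSpace ℝ (Fin N),
          ENNReal.ofReal ((1/(2*(N:ℝ))) * (‖fderiv ℝ u x‖ ^ a + ‖fderiv ℝ u x‖ ^ b)) =
          ENNReal.ofReal (1/(2*(N:ℝ))) *
            (ENNReal.ofReal (‖fderiv ℝ u x‖ ^ a) + ENNReal.ofReal (‖fderiv ℝ u x‖ ^ b)) := by
        intro x
        rw [ENNReal.ofReal_mul (one_div_nonneg.2 (by linarith)),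
          ENNReal.ofReal_add (Real.rpow_nonneg (norm_nonneg _) _)
            (Real.rpow_nonneg (norm_nonneg _) _)]
      simp_rw [heq]
      rw [lintegral_const_mul' _ _ ENNReal.ofReal_ne_top,
        lintegral_add_left (hmeasg a (by linarith)) _]
    rw [hleft]
    calc (∫⁻ x in Ω, ENNReal.ofReal ((1/(2*(N:ℝ))) * (‖fderiv ℝ u x‖ ^ a + ‖fderiv ℝ u x‖ ^ b)))
        ≤ ∫⁻ x in Ω, (ENNReal.ofReal ((1/p₁ x) * ‖fderiv ℝ u x‖ ^ p₁ x) +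
            ENNReal.ofReal ((1/p₂ x) * ‖fderiv ℝ u x‖ ^ p₂ x)) := by
          refine lintegral_mono_ae ?_
          filter_upwards [ae_restrict_mem hΩo.measurableSet] with x hx
          exact hpt x hx
      _ = Jfun N Ω p₁ p₂ u := lintegral_add_left' h1meas _
  -- assemble
  have hABJ : A + B ≤ ENNReal.ofReal (2*(N:ℝ)) * Jfun N Ω p₁ p₂ u := by
    have h := mul_le_mul_right step4 (ENNReal.ofReal (2*(N:ℝ)))
    rwa [← mul_assoc, ← ENNReal.ofReal_mul (by linarith), mul_one_div,
      div_self (by linarith : 2*(N:ℝ) ≠ 0), ENNReal.ofReal_one, one_mul] at h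
  have key : Ifun N Ω q u ≤ Kc * Jfun N Ω p₁ p₂ u := by
    calc Ifun N Ω q u ≤ ENNReal.ofReal (1/qm) * (X1 + X2) := step1
      _ ≤ ENNReal.ofReal (1/qm) * (((C₁ : ℝ≥0∞) ^ qm + (C₂ : ℝ≥0∞) ^ qp) * (A + B)) :=
          mul_le_mul_right hXAB _
      _ ≤ ENNReal.ofReal (1/qm) * (((C₁ : ℝ≥0∞) ^ qm + (C₂ : ℝ≥0∞) ^ qp) *
            (ENNReal.ofReal (2*(N:ℝ)) * Jfun N Ω p₁ p₂ u)) :=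
          mul_le_mul_right (mul_le_mul_right hABJ _) _
      _ = (ENNReal.ofReal (1/qm) * ((C₁ : ℝ≥0∞) ^ qm + (C₂ : ℝ≥0∞) ^ qp) *
            ENNReal.ofReal (2*(N:ℝ))) * Jfun N Ω p₁ p₂ u := by ring
      _ ≤ Kc * Jfun N Ω p₁ p₂ u := by
          rw [hKcdef]; exact mul_le_mul_left le_self_add _
  calc ENNReal.ofReal (Kc.toReal)⁻¹ * Ifun N Ω q u
      ≤ ENNReal.ofReal (Kc.toReal)⁻¹ * (Kc * Jfun N Ω p₁ p₂ u) := mul_le_mul_right key _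
    _ = (Kc⁻¹ * Kc) * Jfun N Ω p₁ p₂ u := by
        rw [ENNReal.ofReal_inv_of_pos (ENNReal.toReal_pos hKc0 hKc_ne_top),
          ENNReal.ofReal_toReal hKc_ne_top, mul_assoc]
    _ = Jfun N Ω p₁ p₂ u := by rw [ENNReal.inv_mul_cancel hKc0 hKc_ne_top, one_mul]
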